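/- Let φ and ψ be order automorphisms of ℚ. Suppose there exists a bijection F between the set of orbitals of φ and the set of orbitals of ψ such that: (i) F is order-preserving (if orbital O₁ lies entirely below orbital O₂ then F(O₁) lies entirely below F(O₂)); and (ii) F is parity-preserving (F sends singleton fixed-point orbitals to singleton fixed-point orbitals, orbitals on which φ(r) > r to orbitals on which ψ(r) > r, and orbitals on which φ(r) < r to orbitals on which ψ(r) < r). Then φ and ψ are conjugate in Aut(ℚ): there exists an order automorphism β of ℚ with β ∘ φ = ψ ∘ β. -/

import Mathlib

/-- The orbital of an order automorphism `φ` of `ℚ` containing `q`: the order-convex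
hull of the ℤ-orbit `{φ^n q : n ∈ ℤ}`. -/
def orbital (φ : ℚ ≃o ℚ) (q : ℚ) : Set ℚ :=
  {r : ℚ | ∃ m n : ℤ, (φ.toEquiv ^ m) q ≤ r ∧ r ≤ (φ.toEquiv ^ n) q}

/-- The set of orbitals of `φ`. -/
def Orbitals (φ : ℚ ≃o ℚ) : Set (Set ℚ) :=
  {O : Set ℚ | ∃ q : ℚ, O = orbital φ q}

/-- `A` lies entirely below `B`. -/
def Below (A B : Set ℚ) : Prop := ∀ a ∈ A, ∀ b ∈ B, a < b

namespace Stmt6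

lemma zpow_strictMono (φ : ℚ ≃o ℚ) (n : ℤ) : StrictMono ⇑(φ.toEquiv ^ n) := by
  induction n using Int.induction_on with
  | zero => simpa using strictMono_id
  | succ n ih =>
    have h : φ.toEquiv ^ ((n : ℤ) + 1) = φ.toEquiv * φ.toEquiv ^ (n : ℤ) := by
      rw [← zpow_one_add]; ring_nf
    have hc : ⇑(φ.toEquiv * φ.toEquiv ^ (n : ℤ)) = ⇑φ ∘ ⇑(φ.toEquiv ^ (n : ℤ)) := rfl
    rw [h, hc]
    exact φ.strictMono.comp ih
  | pred n ih =>
    have h : φ.toEquiv ^ (-(n : ℤ) - 1) = φ.toEquiv⁻¹ * φ.toEquiv ^ (-(n : ℤ)) := by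
      rw [← zpow_neg_one, ← zpow_add]; ring_nf
    have hc : ⇑(φ.toEquiv⁻¹ * φ.toEquiv ^ (-(n : ℤ))) = ⇑φ.symm ∘ ⇑(φ.toEquiv ^ (-(n : ℤ))) := rfl
    rw [h, hc]
    exact φ.symm.strictMono.comp ih

lemma zpow_apply_apply (φ : ℚ ≃o ℚ) (m n : ℤ) (q : ℚ) :
    (φ.toEquiv ^ m) ((φ.toEquiv ^ n) q) = (φ.toEquiv ^ (m + n)) q := by
  rw [zpow_add]; rfl

lemma apply_zpow (φ : ℚ ≃o ℚ) (n : ℤ) (q : ℚ) :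
    φ ((φ.toEquiv ^ n) q) = (φ.toEquiv ^ (n + 1)) q := by
  have : (φ.toEquiv ^ (n + 1)) q = (φ.toEquiv ^ (1 : ℤ)) ((φ.toEquiv ^ n) q) := by
    rw [zpow_apply_apply]; ring_nf
  rw [this, zpow_one]; rfl

lemma symm_apply_zpow (φ : ℚ ≃o ℚ) (n : ℤ) (q : ℚ) :
    φ.symm ((φ.toEquiv ^ n) q) = (φ.toEquiv ^ (n - 1)) q := by
  have := apply_zpow φ (n - 1) q
  rw [sub_add_cancel] at this
  rw [← this, OrderIso.symm_apply_apply]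

lemma orbit_strictMono {φ : ℚ ≃o ℚ} {q : ℚ} (hq : q < φ q) :
    StrictMono fun n : ℤ => (φ.toEquiv ^ n) q := by
  apply strictMono_int_of_lt_succ
  intro n
  have h := (zpow_strictMono φ n) hq
  have h2 : (φ.toEquiv ^ n) (φ q) = (φ.toEquiv ^ (n + 1)) q := by
    have : φ q = (φ.toEquiv ^ (1 : ℤ)) q := by rw [zpow_one]; rfl
    rw [this, zpow_apply_apply]
  rw [h2] at h
  exact h

lemma mem_orbital_self (φ : ℚ ≃o ℚ) (q : ℚ) : q ∈ orbital φ q :=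
  ⟨0, 0, by simp, by simp⟩

lemma orbital_symm_mem {φ : ℚ ≃o ℚ} {q r : ℚ} (h : r ∈ orbital φ q) : q ∈ orbital φ r := by
  obtain ⟨m, n, h1, h2⟩ := h
  refine ⟨-n, -m, ?_, ?_⟩
  · have := (zpow_strictMono φ (-n)).monotone h2
    rwa [zpow_apply_apply, neg_add_cancel, zpow_zero, Equiv.Perm.one_apply] at this
  · have := (zpow_strictMono φ (-m)).monotone h1
    rwa [zpow_apply_apply, neg_add_cancel, zpow_zero, Equiv.Perm.one_apply] at this

lemma orbital_mem_trans {φ : ℚ ≃o ℚ} {q r s : ℚ} (h1 : r ∈ orbital φ q)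
    (h2 : s ∈ orbital φ r) : s ∈ orbital φ q := by
  obtain ⟨m, n, hm, hn⟩ := h1
  obtain ⟨a, b, ha, hb⟩ := h2
  refine ⟨a + m, b + n, ?_, ?_⟩
  · calc (φ.toEquiv ^ (a + m)) q = (φ.toEquiv ^ a) ((φ.toEquiv ^ m) q) :=
        (zpow_apply_apply φ a m q).symm
      _ ≤ (φ.toEquiv ^ a) r := (zpow_strictMono φ a).monotone hm
      _ ≤ s := ha
  · calc s ≤ (φ.toEquiv ^ b) r := hb
      _ ≤ (φ.toEquiv ^ b) ((φ.toEquiv ^ n) q) := (zpow_strictMono φ b).monotone hn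
      _ = (φ.toEquiv ^ (b + n)) q := zpow_apply_apply φ b n q

lemma orbital_eq_of_mem {φ : ℚ ≃o ℚ} {q r : ℚ} (h : r ∈ orbital φ q) :
    orbital φ r = orbital φ q := by
  ext s
  exact ⟨fun hs => orbital_mem_trans h hs,
    fun hs => orbital_mem_trans (orbital_symm_mem h) hs⟩

lemma orbital_convex {φ : ℚ ≃o ℚ} {q a b x : ℚ} (ha : a ∈ orbital φ q)
    (hb : b ∈ orbital φ q) (h1 : a ≤ x) (h2 : x ≤ b) : x ∈ orbital φ q := by
  obtain ⟨m, _, hm, _⟩ := ha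
  obtain ⟨_, n, _, hn⟩ := hb
  exact ⟨m, n, hm.trans h1, h2.trans hn⟩

lemma apply_mem_orbital {φ : ℚ ≃o ℚ} {q r : ℚ} (h : r ∈ orbital φ q) :
    φ r ∈ orbital φ q := by
  obtain ⟨m, n, hm, hn⟩ := h
  exact ⟨m + 1, n + 1, by rw [← apply_zpow]; exact φ.strictMono.monotone hm,
    by rw [← apply_zpow]; exact φ.strictMono.monotone hn⟩

lemma zpow_mem_orbital {φ : ℚ ≃o ℚ} {q r : ℚ} (k : ℤ) (h : r ∈ orbital φ q) :
    (φ.toEquiv ^ k) r ∈ orbital φ q := by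
  obtain ⟨m, n, hm, hn⟩ := h
  refine ⟨k + m, k + n, ?_, ?_⟩
  · rw [← zpow_apply_apply]; exact (zpow_strictMono φ k).monotone hm
  · rw [← zpow_apply_apply]; exact (zpow_strictMono φ k).monotone hn

lemma zpow_fixed {φ : ℚ ≃o ℚ} {q : ℚ} (h : φ q = q) (n : ℤ) : (φ.toEquiv ^ n) q = q :=
  Equiv.Perm.zpow_apply_eq_self_of_apply_eq_self h n

lemma orbital_fixed {φ : ℚ ≃o ℚ} {q : ℚ} (h : φ q = q) : orbital φ q = {q} := by
  ext r
  constructor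
  · rintro ⟨m, n, hm, hn⟩
    rw [zpow_fixed h] at hm hn
    exact le_antisymm hn hm
  · rintro rfl
    exact mem_orbital_self φ r

lemma orbital_up {φ : ℚ ≃o ℚ} {q : ℚ} (hq : q < φ q) :
    ∀ r ∈ orbital φ q, r < φ r := by
  rintro r ⟨m, n, hm, hn⟩
  by_contra hcon
  push_neg at hcon
  have key : ∀ k : ℕ, (φ.toEquiv ^ (m + k)) q ≤ r := by
    intro k
    induction k with
    | zero => simpa using hm
    | succ k ih =>
      have : (φ.toEquiv ^ (m + (k + 1) : ℤ)) q = φ ((φ.toEquiv ^ (m + k : ℤ)) q) := by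
        rw [apply_zpow]; ring_nf
      push_cast
      rw [this]
      calc φ ((φ.toEquiv ^ (m + k : ℤ)) q) ≤ φ r := φ.strictMono.monotone ih
        _ ≤ r := hcon
  set k : ℕ := (n + 1 - m).toNat with hk
  have hmk : n + 1 ≤ m + k := by
    rcases le_or_gt (n + 1 - m) 0 with h | h
    · have : k = 0 := by simp [hk, Int.toNat_of_nonpos h]
      omega
    · have : (k : ℤ) = n + 1 - m := Int.toNat_of_nonneg h.le
      omega
  have h1 : (φ.toEquiv ^ (n + 1)) q ≤ (φ.toEquiv ^ (m + k)) q :=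
    (orbit_strictMono hq).monotone hmk
  have h2 : r < (φ.toEquiv ^ (n + 1)) q := lt_of_le_of_lt hn (orbit_strictMono hq (by omega))
  exact absurd ((h1.trans (key k)).trans_lt h2) (lt_irrefl _)

lemma orbital_symm_eq (φ : ℚ ≃o ℚ) (q : ℚ) : orbital φ.symm q = orbital φ q := by
  have key : ∀ m : ℤ, (φ.symm.toEquiv ^ m) = (φ.toEquiv ^ (-m)) := by
    intro m
    have : φ.symm.toEquiv = φ.toEquiv⁻¹ := rfl
    rw [this, inv_zpow, ← zpow_neg]
  ext r
  constructor
  · rintro ⟨m, n, hm, hn⟩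
    rw [key] at hm hn
    exact ⟨-m, -n, hm, hn⟩
  · rintro ⟨m, n, hm, hn⟩
    exact ⟨-m, -n, by rw [key, neg_neg]; exact hm, by rw [key, neg_neg]; exact hn⟩

lemma orbital_down {φ : ℚ ≃o ℚ} {q : ℚ} (hq : φ q < q) :
    ∀ r ∈ orbital φ q, φ r < r := by
  intro r hr
  have hq' : q < φ.symm q := by
    have := φ.symm.strictMono hq
    rwa [OrderIso.symm_apply_apply] at this
  have hr' : r ∈ orbital φ.symm q := by rwa [orbital_symm_eq]
  have := orbital_up hq' r hr'
  have h2 := φ.strictMono this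
  rwa [OrderIso.apply_symm_apply] at h2

end Stmt6
namespace Stmt6

lemma exists_decomp {φ : ℚ ≃o ℚ} {q r : ℚ} (hq : q < φ q) (hr : r ∈ orbital φ q) :
    ∃ n : ℤ, (φ.toEquiv ^ n) q ≤ r ∧ r < (φ.toEquiv ^ (n + 1)) q := by
  obtain ⟨m, n, hm, hn⟩ := hr
  obtain ⟨l, hl, hmax⟩ := Int.exists_greatest_of_bdd
    (P := fun z => (φ.toEquiv ^ z) q ≤ r)
    ⟨n, fun z hz => ((orbit_strictMono hq).le_iff_le).1 (hz.trans hn)⟩ ⟨m, hm⟩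
  refine ⟨l, hl, ?_⟩
  by_contra hcon
  push_neg at hcon
  have := hmax (l + 1) hcon
  omega

lemma decomp_unique {φ : ℚ ≃o ℚ} {q r : ℚ} (hq : q < φ q) {a b : ℤ}
    (ha : (φ.toEquiv ^ a) q ≤ r ∧ r < (φ.toEquiv ^ (a + 1)) q)
    (hb : (φ.toEquiv ^ b) q ≤ r ∧ r < (φ.toEquiv ^ (b + 1)) q) : a = b := by
  have h1 : a < b + 1 := (orbit_strictMono hq).lt_iff_lt.1 (ha.1.trans_lt hb.2)
  have h2 : b < a + 1 := (orbit_strictMono hq).lt_iff_lt.1 (hb.1.trans_lt ha.2)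
  omega

lemma exists_Ioo_iso (a b c d : ℚ) (h1 : a < b) (h2 : c < d) :
    Nonempty (↥(Set.Ioo a b) ≃o ↥(Set.Ioo c d)) := by
  have i1 : Nonempty ↥(Set.Ioo a b) := (Set.nonempty_Ioo.2 h1).to_subtype
  have i2 : Nonempty ↥(Set.Ioo c d) := (Set.nonempty_Ioo.2 h2).to_subtype
  exact Order.iso_of_countable_dense _ _

/-- Fundamental domain map for an up-bump: strictly monotone from `[q, φ q)` onto
`[q', ψ q')`. -/
lemma exists_fd_map {φ ψ : ℚ ≃o ℚ} {q q' : ℚ} (hq : q < φ q) (hq' : q' < ψ q') :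
    ∃ f₀ : ℚ → ℚ, StrictMonoOn f₀ (Set.Ico q (φ q)) ∧
      (∀ x ∈ Set.Ico q (φ q), f₀ x ∈ Set.Ico q' (ψ q')) ∧
      (∀ y ∈ Set.Ico q' (ψ q'), ∃ x ∈ Set.Ico q (φ q), f₀ x = y) := by
  obtain ⟨e⟩ := exists_Ioo_iso q (φ q) q' (ψ q') hq hq'
  refine ⟨fun x => if h : x ∈ Set.Ioo q (φ q) then (e ⟨x, h⟩ : ℚ) else q', ?_, ?_, ?_⟩
  · rintro x ⟨hx1, hx2⟩ y ⟨hy1, hy2⟩ hxy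
    rcases eq_or_lt_of_le hx1 with rfl | hx1'
    · have hy : y ∈ Set.Ioo q (φ q) := ⟨hxy, hy2⟩
      simp only [dif_pos hy, dif_neg (fun h : q ∈ Set.Ioo q (φ q) => lt_irrefl q h.1)]
      exact (e ⟨y, hy⟩).2.1
    · have hx : x ∈ Set.Ioo q (φ q) := ⟨hx1', hx2⟩
      have hy : y ∈ Set.Ioo q (φ q) := ⟨hx1'.trans hxy, hy2⟩
      simp only [dif_pos hx, dif_pos hy]
      exact_mod_cast e.strictMono (by exact_mod_cast hxy : (⟨x, hx⟩ : ↥(Set.Ioo q (φ q))) < ⟨y, hy⟩)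
  · rintro x ⟨hx1, hx2⟩
    by_cases h : x ∈ Set.Ioo q (φ q)
    · simp only [dif_pos h]
      exact ⟨(e ⟨x, h⟩).2.1.le, (e ⟨x, h⟩).2.2⟩
    · simp only [dif_neg h]
      exact ⟨le_refl q', hq'⟩
  · rintro y ⟨hy1, hy2⟩
    rcases eq_or_lt_of_le hy1 with rfl | hy1'
    · exact ⟨q, ⟨le_refl _, hq⟩, by
        simp only [dif_neg (fun h : q ∈ Set.Ioo q (φ q) => lt_irrefl q h.1)]⟩
    · refine ⟨(e.symm ⟨y, hy1', hy2⟩ : ℚ), ⟨(e.symm ⟨y, hy1', hy2⟩).2.1.le,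
        (e.symm ⟨y, hy1', hy2⟩).2.2⟩, ?_⟩
      have hmem : ((e.symm ⟨y, hy1', hy2⟩ : ℚ)) ∈ Set.Ioo q (φ q) := (e.symm ⟨y, hy1', hy2⟩).2
      simp only [dif_pos hmem]
      have : (⟨(e.symm ⟨y, hy1', hy2⟩ : ℚ), hmem⟩ : ↥(Set.Ioo q (φ q))) = e.symm ⟨y, hy1', hy2⟩ :=
        Subtype.ext rfl
      rw [this, e.apply_symm_apply]

end Stmt6
namespace Stmt6

lemma zpow_one_apply (φ : ℚ ≃o ℚ) (q : ℚ) : (φ.toEquiv ^ (1 : ℤ)) q = φ q := by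
  rw [zpow_one]; rfl

lemma decomp_mem_Ico {φ : ℚ ≃o ℚ} {q r : ℚ} {n : ℤ}
    (h1 : (φ.toEquiv ^ n) q ≤ r) (h2 : r < (φ.toEquiv ^ (n + 1)) q) :
    (φ.toEquiv ^ (-n)) r ∈ Set.Ico q (φ q) := by
  constructor
  · have := (zpow_strictMono φ (-n)).monotone h1
    rwa [zpow_apply_apply, neg_add_cancel, zpow_zero, Equiv.Perm.one_apply] at this
  · have := (zpow_strictMono φ (-n)) h2
    rw [zpow_apply_apply] at this
    have e1 : -n + (n + 1) = (1 : ℤ) := by ring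
    rwa [e1, zpow_one_apply] at this

lemma Ico_subset_orbital {ψ : ℚ ≃o ℚ} {q' x : ℚ} (h : x ∈ Set.Ico q' (ψ q')) :
    x ∈ orbital ψ q' := by
  refine ⟨0, 1, ?_, ?_⟩
  · simpa using h.1
  · rw [zpow_one_apply]; exact h.2.le

lemma upbump (φ ψ : ℚ ≃o ℚ) (q q' : ℚ) (hq : q < φ q) (hq' : q' < ψ q') :
    ∃ f : ℚ → ℚ, StrictMonoOn f (orbital φ q) ∧
      (∀ r ∈ orbital φ q, f r ∈ orbital ψ q') ∧
      (∀ y ∈ orbital ψ q', ∃ r ∈ orbital φ q, f r = y) ∧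
      (∀ r ∈ orbital φ q, f (φ r) = ψ (f r)) := by
  classical
  obtain ⟨f₀, hmono, hmaps, honto⟩ := exists_fd_map hq hq'
  set f : ℚ → ℚ := fun r => if h : r ∈ orbital φ q then
    (ψ.toEquiv ^ (exists_decomp hq h).choose)
      (f₀ ((φ.toEquiv ^ (-(exists_decomp hq h).choose)) r)) else r with hf
  have feval : ∀ (r : ℚ) (h : r ∈ orbital φ q) (n : ℤ),
      (φ.toEquiv ^ n) q ≤ r → r < (φ.toEquiv ^ (n + 1)) q →
      f r = (ψ.toEquiv ^ n) (f₀ ((φ.toEquiv ^ (-n)) r)) := by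
    intro r h n h1 h2
    have hspec := (exists_decomp hq h).choose_spec
    have heq : (exists_decomp hq h).choose = n := decomp_unique hq hspec ⟨h1, h2⟩
    simp only [hf, dif_pos h, heq]
  refine ⟨f, ?_, ?_, ?_, ?_⟩
  · -- strictly monotone on the orbital
    intro r hr s hs hrs
    obtain ⟨a, ha1, ha2⟩ := exists_decomp hq hr
    obtain ⟨b, hb1, hb2⟩ := exists_decomp hq hs
    rw [feval r hr a ha1 ha2, feval s hs b hb1 hb2]
    have hab : a ≤ b := by
      have : a < b + 1 := (orbit_strictMono hq).lt_iff_lt.1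
        (ha1.trans_lt (hrs.trans hb2))
      omega
    rcases eq_or_lt_of_le hab with rfl | hab'
    · exact (zpow_strictMono ψ a)
        (hmono (decomp_mem_Ico ha1 ha2) (decomp_mem_Ico hb1 hb2)
          ((zpow_strictMono φ (-a)) hrs))
    · have hx := hmaps _ (decomp_mem_Ico ha1 ha2)
      have hy := hmaps _ (decomp_mem_Ico hb1 hb2)
      calc (ψ.toEquiv ^ a) (f₀ ((φ.toEquiv ^ (-a)) r))
          < (ψ.toEquiv ^ a) (ψ q') := (zpow_strictMono ψ a) hx.2
        _ = (ψ.toEquiv ^ (a + 1)) q' := by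
            rw [← zpow_one_apply ψ q', zpow_apply_apply]
        _ ≤ (ψ.toEquiv ^ b) q' := (orbit_strictMono hq').monotone (by omega)
        _ ≤ (ψ.toEquiv ^ b) (f₀ ((φ.toEquiv ^ (-b)) s)) :=
            (zpow_strictMono ψ b).monotone hy.1
  · -- maps into the target orbital
    intro r hr
    obtain ⟨a, ha1, ha2⟩ := exists_decomp hq hr
    rw [feval r hr a ha1 ha2]
    exact zpow_mem_orbital a (Ico_subset_orbital (hmaps _ (decomp_mem_Ico ha1 ha2)))
  · -- onto the target orbital
    intro y hy
    obtain ⟨b, hb1, hb2⟩ := exists_decomp hq' hy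
    obtain ⟨x₀, hx₀, hfx⟩ := honto _ (decomp_mem_Ico hb1 hb2)
    refine ⟨(φ.toEquiv ^ b) x₀, zpow_mem_orbital b (Ico_subset_orbital hx₀), ?_⟩
    have h1 : (φ.toEquiv ^ b) q ≤ (φ.toEquiv ^ b) x₀ := (zpow_strictMono φ b).monotone hx₀.1
    have h2 : (φ.toEquiv ^ b) x₀ < (φ.toEquiv ^ (b + 1)) q := by
      have := (zpow_strictMono φ b) hx₀.2
      rwa [← zpow_one_apply φ q, zpow_apply_apply] at this
    rw [feval _ (zpow_mem_orbital b (Ico_subset_orbital hx₀)) b h1 h2,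
      zpow_apply_apply, neg_add_cancel, zpow_zero, Equiv.Perm.one_apply, hfx,
      zpow_apply_apply, add_neg_cancel, zpow_zero, Equiv.Perm.one_apply]
  · -- equivariance
    intro r hr
    obtain ⟨a, ha1, ha2⟩ := exists_decomp hq hr
    have hr' : φ r ∈ orbital φ q := apply_mem_orbital hr
    have h1 : (φ.toEquiv ^ (a + 1)) q ≤ φ r := by
      rw [← apply_zpow]; exact φ.strictMono.monotone ha1
    have h2 : φ r < (φ.toEquiv ^ (a + 1 + 1)) q := by
      rw [← apply_zpow]; exact φ.strictMono ha2
    rw [feval _ hr' (a + 1) h1 h2, feval r hr a ha1 ha2]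
    have h3 : (φ.toEquiv ^ (-(a + 1))) (φ r) = (φ.toEquiv ^ (-a)) r := by
      rw [← zpow_one_apply φ r, zpow_apply_apply]
      ring_nf
    rw [h3, apply_zpow]

end Stmt6
namespace Stmt6

lemma below_of_not_mem {φ : ℚ ≃o ℚ} {r s : ℚ} (hrs : r < s) (hns : s ∉ orbital φ r) :
    Below (orbital φ r) (orbital φ s) := by
  intro a ha b hb
  by_contra hcon
  push_neg at hcon
  rcases le_or_gt s a with h | h
  · exact hns (orbital_convex (mem_orbital_self φ r) ha hrs.le h)
  · have haa : a ∈ orbital φ s := orbital_convex hb (mem_orbital_self φ s) hcon h.le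
    have : s ∈ orbital φ r := by
      rw [← orbital_eq_of_mem ha]; exact orbital_symm_mem haa
    exact hns this

end Stmt6

/-- If there is an order- and parity-preserving bijection between the
orbitals of `φ` and the orbitals of `ψ`, then `φ` and `ψ` are conjugate in `Aut(ℚ)`. -/
theorem stmt_6 (φ ψ : ℚ ≃o ℚ) (F : Orbitals φ ≃ Orbitals ψ)
    (hord : ∀ O₁ O₂ : Orbitals φ, Below (O₁ : Set ℚ) (O₂ : Set ℚ) →
      Below (F O₁ : Set ℚ) (F O₂ : Set ℚ))
    (hfix : ∀ O : Orbitals φ, (∃ q : ℚ, (O : Set ℚ) = {q} ∧ φ q = q) →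
      ∃ q : ℚ, (F O : Set ℚ) = {q} ∧ ψ q = q)
    (hup : ∀ O : Orbitals φ, (∀ r ∈ (O : Set ℚ), r < φ r) →
      ∀ r ∈ (F O : Set ℚ), r < ψ r)
    (hdown : ∀ O : Orbitals φ, (∀ r ∈ (O : Set ℚ), φ r < r) →
      ∀ r ∈ (F O : Set ℚ), ψ r < r) :
    ∃ β : ℚ ≃o ℚ, ∀ q : ℚ, β (φ q) = ψ (β q) := by
  classical
  open Stmt6 in
  have main : ∀ O : Orbitals φ, ∃ f : ℚ → ℚ, StrictMonoOn f (O : Set ℚ) ∧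
      (∀ r ∈ (O : Set ℚ), f r ∈ (F O : Set ℚ)) ∧
      (∀ y ∈ (F O : Set ℚ), ∃ r ∈ (O : Set ℚ), f r = y) ∧
      (∀ r ∈ (O : Set ℚ), f (φ r) = ψ (f r)) := by
    intro O
    obtain ⟨q, hOq⟩ := O.2
    obtain ⟨q', hOq'⟩ := (F O).2
    rcases lt_trichotomy q (φ q) with hlt | heq | hgt
    · -- up bump
      have hupO : ∀ r ∈ (O : Set ℚ), r < φ r := by
        rw [hOq]; exact Stmt6.orbital_up hlt
      have hq' : q' < ψ q' := hup O hupO q'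
        (by rw [hOq']; exact Stmt6.mem_orbital_self ψ q')
      obtain ⟨f, h1, h2, h3, h4⟩ := Stmt6.upbump φ ψ q q' hlt hq'
      rw [hOq, hOq']
      exact ⟨f, h1, h2, h3, h4⟩
    · -- fixed point
      have hOsing : (O : Set ℚ) = {q} := by
        rw [hOq]; exact Stmt6.orbital_fixed heq.symm
      obtain ⟨p, hp1, hp2⟩ := hfix O ⟨q, hOsing, heq.symm⟩
      refine ⟨fun _ => p, ?_, ?_, ?_, ?_⟩
      · intro a ha b hb hab
        rw [hOsing] at ha hb
        simp only [Set.mem_singleton_iff] at ha hb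
        subst ha; subst hb
        exact absurd hab (lt_irrefl _)
      · intro r _
        rw [hp1]; exact Set.mem_singleton p
      · intro y hy
        rw [hp1] at hy
        simp only [Set.mem_singleton_iff] at hy
        exact ⟨q, by rw [hOsing]; exact Set.mem_singleton q, hy.symm⟩
      · intro r _
        rw [hp2]
    · -- down bump
      have hdownO : ∀ r ∈ (O : Set ℚ), φ r < r := by
        rw [hOq]; exact Stmt6.orbital_down hgt
      have hψq' : ψ q' < q' := hdown O hdownO q'
        (by rw [hOq']; exact Stmt6.mem_orbital_self ψ q')
      have hq1 : q < φ.symm q := by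
        have := φ.symm.strictMono hgt
        rwa [OrderIso.symm_apply_apply] at this
      have hq2 : q' < ψ.symm q' := by
        have := ψ.symm.strictMono hψq'
        rwa [OrderIso.symm_apply_apply] at this
      obtain ⟨f, h1, h2, h3, h4⟩ := Stmt6.upbump φ.symm ψ.symm q q' hq1 hq2
      rw [Stmt6.orbital_symm_eq φ q] at h1 h2 h3 h4
      rw [Stmt6.orbital_symm_eq ψ q'] at h2 h3
      rw [hOq, hOq']
      refine ⟨f, h1, h2, h3, ?_⟩
      intro r hr
      have hφr : φ r ∈ orbital φ q := Stmt6.apply_mem_orbital hr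
      have h5 := h4 (φ r) hφr
      rw [OrderIso.symm_apply_apply] at h5
      have h6 := congrArg ψ h5
      rwa [OrderIso.apply_symm_apply, eq_comm] at h6
  set C : Orbitals φ → ℚ → ℚ := fun O => (main O).choose with hC
  have Cspec : ∀ O : Orbitals φ, StrictMonoOn (C O) (O : Set ℚ) ∧
      (∀ r ∈ (O : Set ℚ), C O r ∈ (F O : Set ℚ)) ∧
      (∀ y ∈ (F O : Set ℚ), ∃ r ∈ (O : Set ℚ), C O r = y) ∧
      (∀ r ∈ (O : Set ℚ), C O (φ r) = ψ (C O r)) := fun O => (main O).choose_spec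
  set g : ℚ → ℚ := fun r => C ⟨orbital φ r, ⟨r, rfl⟩⟩ r with hg
  have gcong : ∀ (r s : ℚ), s ∈ orbital φ r → g s = C ⟨orbital φ r, ⟨r, rfl⟩⟩ s := by
    intro r s hs
    have heq : (⟨orbital φ s, ⟨s, rfl⟩⟩ : Orbitals φ) = ⟨orbital φ r, ⟨r, rfl⟩⟩ :=
      Subtype.ext (Stmt6.orbital_eq_of_mem hs)
    simp only [hg]
    rw [heq]
  have gmono : StrictMono g := by
    intro r s hrs
    by_cases hmem : s ∈ orbital φ r
    · have h1 : g r = C ⟨orbital φ r, ⟨r, rfl⟩⟩ r := rfl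
      rw [h1, gcong r s hmem]
      exact (Cspec _).1 (Stmt6.mem_orbital_self φ r) hmem hrs
    · have hbel : Below (orbital φ r) (orbital φ s) := Stmt6.below_of_not_mem hrs hmem
      have hbel' := hord ⟨orbital φ r, ⟨r, rfl⟩⟩ ⟨orbital φ s, ⟨s, rfl⟩⟩ hbel
      exact hbel' _ ((Cspec ⟨orbital φ r, ⟨r, rfl⟩⟩).2.1 r (Stmt6.mem_orbital_self φ r))
        _ ((Cspec ⟨orbital φ s, ⟨s, rfl⟩⟩).2.1 s (Stmt6.mem_orbital_self φ s))
  have gsurj : Function.Surjective g := by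
    intro y
    set O' : Orbitals ψ := ⟨orbital ψ y, ⟨y, rfl⟩⟩ with hO'
    set O := F.symm O' with hO
    have hFO : F O = O' := F.apply_symm_apply O'
    have hy : y ∈ (F O : Set ℚ) := by
      rw [hFO]; exact Stmt6.mem_orbital_self ψ y
    obtain ⟨r, hr, hfr⟩ := (Cspec O).2.2.1 y hy
    have hOr : (⟨orbital φ r, ⟨r, rfl⟩⟩ : Orbitals φ) = O := by
      obtain ⟨p, hp⟩ := O.2
      apply Subtype.ext
      show orbital φ r = (O : Set ℚ)
      rw [hp] at hr ⊢
      exact Stmt6.orbital_eq_of_mem hr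
    refine ⟨r, ?_⟩
    show C ⟨orbital φ r, ⟨r, rfl⟩⟩ r = y
    rw [hOr]
    exact hfr
  have gequi : ∀ r, g (φ r) = ψ (g r) := by
    intro r
    have h1 : g (φ r) = C ⟨orbital φ r, ⟨r, rfl⟩⟩ (φ r) :=
      gcong r (φ r) (Stmt6.apply_mem_orbital (Stmt6.mem_orbital_self φ r))
    rw [h1, (Cspec ⟨orbital φ r, ⟨r, rfl⟩⟩).2.2.2 r (Stmt6.mem_orbital_self φ r)]
  refine ⟨StrictMono.orderIsoOfSurjective g gmono gsurj, fun x => ?_⟩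
  show g (φ x) = ψ (g x)
  exact gequi x
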